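/- Let A be a Banach algebra, B a Banach A-bimodule, and n ≥ 0 an even integer such that every bounded subset of B^(n) is relatively weakly compact. Suppose (e_α^(n)) is a bounded net in A^(n) with b^(n)e_α^(n) → b^(n) in norm for every b^(n) ∈ B^(n) (a bounded right approximate identity for B^(n)), that e_α^(n) → e^(n+2) in the weak* topology of A^(n+2), that e^(n+2) is a right unit for the A^(n+2)-module B^(n+2) and for every b^(n+2) ∈ B^(n+2) and every net (a_β^(n+2)) in A^(n+2) with a_β^(n+2) → e^(n+2) weak* one has b^(n+2)a_β^(n+2) → b^(n+2)e^(n+2) weak* (i.e. Z^ℓ_{e^(n+2)}(B^(n+2)) = B^(n+2)), and that B^(n+2)e_α^(n) ⊆ B^(n) for every α. Then Z^ℓ_{A^(n+2)}(B^(n+2)) = B^(n+2). -/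
import Mathlib


/-!
Common infrastructure for formalizing "Topological centers of the n-th dual of
module actions" (Haghnejad Azar, Riazi).

We work over `ℝ`.  A Banach algebra is a complete `NonUnitalNormedRing` which is
a normed `ℝ`-algebra; a Banach `A`-bimodule `B` is given by two continuous
bilinear module actions `πl : A →L B →L B`, `πr : B →L A →L B` satisfying the
usual associativity identities.

`BB` bundles a normed `ℝ`-space.  `BB.dual` is the topological dual,
`BB.bst` is the Arens adjoint `m ↦ m^*` of a bounded bilinear map
(`⟨m^*(z',x), y⟩ = ⟨z', m(x,y)⟩`), `BB.arens m = m^{***}` is the first Arens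
extension, `BB.diter E k` is the `2k`-th dual of `E`, and `BB.iterBil m k` is
the `k`-fold iterated first Arens extension of `m` acting on `2k`-th duals.

Even integers `n ≥ 0` (resp. `n ≥ 2`) are represented as `n = 2*k`
(resp. `n = 2*(j+1)`), so that `A^{(n)}` is `Ad A k`, `A^{(n+1)}` is
`((BB.of A).diter k).dual.carrier`, etc.

Weak-star and weak convergence of nets are expressed through filters
(`wsTendsto`, `wTendsto`), and the relevant topological centers and `wap`
spaces become the predicates `MemZlBA`, `MemZlAB`, `MemWapL` below.
-/

noncomputable section

/-- A bundled normed real vector space. -/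
structure BB : Type 1 where
  carrier : Type
  [grp : NormedAddCommGroup carrier]
  [mod : NormedSpace ℝ carrier]

attribute [instance] BB.grp BB.mod

open ContinuousLinearMap Filter Topology Bornology

/-- Bundle a normed space. -/
abbrev BB.of (X : Type) [NormedAddCommGroup X] [NormedSpace ℝ X] : BB := ⟨X⟩

/-- The (topological) dual space. -/
abbrev BB.dual (E : BB) : BB := ⟨E.carrier →L[ℝ] ℝ⟩

/-- Bounded bilinear maps `E × F → G`. -/
abbrev BB.Bil (E F G : BB) : Type := E.carrier →L[ℝ] F.carrier →L[ℝ] G.carrier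

/-- The Arens adjoint `m^*` of a bounded bilinear map `m : X × Y → Z`:
`⟨m^*(z', x), y⟩ = ⟨z', m(x, y)⟩`. -/
def BB.bst {E F G : BB} (m : BB.Bil E F G) : BB.Bil G.dual E F.dual :=
  ((ContinuousLinearMap.compL ℝ E.carrier (F.carrier →L[ℝ] G.carrier)
      (F.carrier →L[ℝ] ℝ)).flip m).comp
    (ContinuousLinearMap.compL ℝ F.carrier G.carrier ℝ)

/-- The first Arens extension `m^{***} = ((m^*)^*)^*` of a bounded bilinear map. -/
def BB.arens {E F G : BB} (m : BB.Bil E F G) :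
    BB.Bil E.dual.dual F.dual.dual G.dual.dual :=
  BB.bst (BB.bst (BB.bst m))

/-- The canonical embedding of a normed space into its double dual. -/
def BB.incl (E : BB) : E.carrier →L[ℝ] E.dual.dual.carrier :=
  (ContinuousLinearMap.id ℝ (E.carrier →L[ℝ] ℝ)).flip

/-- The adjoint of a continuous linear map. -/
def BB.adj {E F : BB} (f : E.carrier →L[ℝ] F.carrier) :
    F.dual.carrier →L[ℝ] E.dual.carrier :=
  (ContinuousLinearMap.compL ℝ E.carrier F.carrier ℝ).flip f

/-- `E.diter k` is the `2k`-th dual of `E`. -/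
@[reducible] def BB.diter (E : BB) : ℕ → BB
  | 0 => E
  | k + 1 => ((BB.diter E k).dual).dual

/-- The `k`-fold iterated first Arens extension of `m` to the `2k`-th duals. -/
@[reducible] def BB.iterBil {E F G : BB} (m : BB.Bil E F G) :
    ∀ k : ℕ, BB.Bil (E.diter k) (F.diter k) (G.diter k)
  | 0 => m
  | k + 1 => BB.arens (BB.iterBil m k)

/-- Weak-star convergence of a net of functionals (nets are encoded as maps
together with a filter on the index type). -/
def wsTendsto {E : BB} {ι : Type} (l : Filter ι) (f : ι → E.dual.carrier)
    (g : E.dual.carrier) : Prop :=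
  ∀ x : E.carrier, Tendsto (fun i => f i x) l (𝓝 (g x))

/-- Weak convergence of a net. -/
def wTendsto {E : BB} {ι : Type} (l : Filter ι) (f : ι → E.carrier)
    (g : E.carrier) : Prop :=
  ∀ ψ : E.dual.carrier, Tendsto (fun i => ψ (f i)) l (𝓝 (ψ g))

/-- A set is relatively weakly compact if its closure in the weak topology is
compact. -/
def RelWeaklyCompact {E : BB} (s : Set E.carrier) : Prop :=
  IsCompact (closure (toWeakSpace ℝ E.carrier '' s))

section Setup

variable (A B : Type) [NonUnitalNormedRing A] [NormedSpace ℝ A] [IsScalarTower ℝ A A]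
  [SMulCommClass ℝ A A] [NormedAddCommGroup B] [NormedSpace ℝ B]

/-- `A^{(2k)}`, the `2k`-th dual of `A`. -/
abbrev Ad (k : ℕ) : Type := ((BB.of A).diter k).carrier

/-- `B^{(2k)}`, the `2k`-th dual of `B`. -/
abbrev Bd (k : ℕ) : Type := ((BB.of B).diter k).carrier

variable (πl : A →L[ℝ] B →L[ℝ] B) (πr : B →L[ℝ] A →L[ℝ] B)

/-- The iterated (first Arens extension of the) left module action
`A^{(2k)} × B^{(2k)} → B^{(2k)}`. -/
abbrev actL (k : ℕ) :
    ((BB.of A).diter k).carrier →L[ℝ] ((BB.of B).diter k).carrier →L[ℝ]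
      ((BB.of B).diter k).carrier :=
  BB.iterBil (E := BB.of A) (F := BB.of B) (G := BB.of B) πl k

/-- The iterated (first Arens extension of the) right module action
`B^{(2k)} × A^{(2k)} → B^{(2k)}`. -/
abbrev actR (k : ℕ) :
    ((BB.of B).diter k).carrier →L[ℝ] ((BB.of A).diter k).carrier →L[ℝ]
      ((BB.of B).diter k).carrier :=
  BB.iterBil (E := BB.of B) (F := BB.of A) (G := BB.of B) πr k

/-- The iterated first Arens product on `A^{(2k)}`. -/
abbrev mulA (k : ℕ) :
    ((BB.of A).diter k).carrier →L[ℝ] ((BB.of A).diter k).carrier →L[ℝ]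
      ((BB.of A).diter k).carrier :=
  BB.iterBil (E := BB.of A) (F := BB.of A) (G := BB.of A) (ContinuousLinearMap.mul ℝ A) k

/-- `a ∈ Z^ℓ_{B^{(2k+2)}}(A^{(2k+2)})`: the map `b ↦ a b` on `B^{(2k+2)}` is
weak-star to weak-star continuous. -/
def MemZlBA (k : ℕ) (a : Ad A (k + 1)) : Prop :=
  ∀ {ι : Type} (l : Filter ι), l.NeBot →
    ∀ (bα : ι → Bd B (k + 1)) (b : Bd B (k + 1)),
      wsTendsto (E := ((BB.of B).diter k).dual) l bα b →
      wsTendsto (E := ((BB.of B).diter k).dual) l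
        (fun i => actL A B πl (k + 1) a (bα i)) (actL A B πl (k + 1) a b)

/-- `b ∈ Z^ℓ_{A^{(2k+2)}}(B^{(2k+2)})`: the map `a ↦ b a` from `A^{(2k+2)}` to
`B^{(2k+2)}` is weak-star to weak-star continuous. -/
def MemZlAB (k : ℕ) (b : Bd B (k + 1)) : Prop :=
  ∀ {ι : Type} (l : Filter ι), l.NeBot →
    ∀ (aα : ι → Ad A (k + 1)) (a : Ad A (k + 1)),
      wsTendsto (E := ((BB.of A).diter k).dual) l aα a →
      wsTendsto (E := ((BB.of B).diter k).dual) l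
        (fun i => actR A B πr (k + 1) b (aα i)) (actR A B πr (k + 1) b a)

/-- `b1 ∈ wap_ℓ(B^{(2k)}) ⊆ B^{(2k+1)}`:
`⟨b2 ⬝ aα, b1⟩ → ⟨b2 ⬝ a2, b1⟩` whenever `aα → a2` weak-star in `A^{(2k+2)}`. -/
def MemWapL (k : ℕ) (b1 : ((BB.of B).diter k).dual.carrier) : Prop :=
  ∀ (b2 : Bd B (k + 1)),
    ∀ {ι : Type} (l : Filter ι), l.NeBot →
      ∀ (aα : ι → Ad A (k + 1)) (a2 : Ad A (k + 1)),
        wsTendsto (E := ((BB.of A).diter k).dual) l aα a2 →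
        Tendsto (fun i => actR A B πr (k + 1) b2 (aα i) b1) l
          (𝓝 (actR A B πr (k + 1) b2 a2 b1))

end Setup

/-- Evaluation of the canonical embedding. -/
lemma BB.incl_apply' (E : BB) (x : E.carrier) (φ : E.dual.carrier) :
    BB.incl E x φ = φ x := rfl

/-- The canonical embedding is isometric. -/
lemma BB.norm_incl (E : BB) (x : E.carrier) : ‖BB.incl E x‖ = ‖x‖ := by
  have h : BB.incl E x = NormedSpace.inclusionInDoubleDualLi ℝ (E := E.carrier) x := rfl
  rw [h, (NormedSpace.inclusionInDoubleDualLi ℝ (E := E.carrier)).norm_map]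

/-- `⟨m***(incl b0, a''), b1⟩ = ⟨a'', m*(b1, b0)⟩`: the first Arens extension
is weak-star continuous in its second variable when the first variable comes
from the original space. -/
lemma BB.arens_incl {E F G : BB} (m : BB.Bil E F G) (b0 : E.carrier)
    (a : F.dual.dual.carrier) (b1 : G.dual.carrier) :
    BB.arens m (BB.incl E b0) a b1 = a (BB.bst m b1 b0) := rfl


/-- (`n = 2*k ≥ 0` even.)  Suppose every bounded subset of
`B^{(n)}` is relatively weakly compact, `(e_α)` is a bounded right approximate
identity for `B^{(n)}` contained in `A^{(n)}`, `e_α → e^{(n+2)}` weak-star in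
`A^{(n+2)}`, `e^{(n+2)}` is a right unit for `B^{(n+2)}` with
`Z^ℓ_{e^{(n+2)}}(B^{(n+2)}) = B^{(n+2)}` (the locally topological center), and
`B^{(n+2)} e_α ⊆ B^{(n)}` for every `α`.  Then
`Z^ℓ_{A^{(n+2)}}(B^{(n+2)}) = B^{(n+2)}`. -/
theorem stmt4
    (A B : Type) [NonUnitalNormedRing A] [NormedSpace ℝ A] [IsScalarTower ℝ A A]
    [SMulCommClass ℝ A A] [CompleteSpace A]
    [NormedAddCommGroup B] [NormedSpace ℝ B] [CompleteSpace B]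
    (πl : A →L[ℝ] B →L[ℝ] B) (πr : B →L[ℝ] A →L[ℝ] B)
    (hπl : ∀ (a a' : A) (b : B), πl (a * a') b = πl a (πl a' b))
    (hπr : ∀ (b : B) (a a' : A), πr b (a * a') = πr (πr b a) a')
    (hπlr : ∀ (a : A) (b : B) (a' : A), πr (πl a b) a' = πl a (πr b a'))
    (k : ℕ)
    (hwc : ∀ s : Set (Bd B k), Bornology.IsBounded s → RelWeaklyCompact (E := (BB.of B).diter k) s)
    {ι : Type} (l : Filter ι) (hl : l.NeBot) (e : ι → Ad A k)
    (hbd : Bornology.IsBounded (Set.range e))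
    (hrai : ∀ b : Bd B k, Filter.Tendsto (fun i => actR A B πr k b (e i)) l (nhds b))
    (e2 : Ad A (k + 1))
    (hconv : wsTendsto (E := ((BB.of A).diter k).dual) l
        (fun i => BB.incl ((BB.of A).diter k) (e i)) e2)
    (hunit : ∀ b2 : Bd B (k + 1), actR A B πr (k + 1) b2 e2 = b2)
    (hloc : ∀ (b2 : Bd B (k + 1)) {κ : Type} (l' : Filter κ), l'.NeBot →
        ∀ aβ : κ → Ad A (k + 1),
          wsTendsto (E := ((BB.of A).diter k).dual) l' aβ e2 →
          wsTendsto (E := ((BB.of B).diter k).dual) l'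
            (fun i => actR A B πr (k + 1) b2 (aβ i)) (actR A B πr (k + 1) b2 e2))
    (hsub : ∀ (i : ι) (b2 : Bd B (k + 1)), ∃ b0 : Bd B k,
        actR A B πr (k + 1) b2 (BB.incl ((BB.of A).diter k) (e i)) =
          BB.incl ((BB.of B).diter k) b0) :
    ∀ b2 : Bd B (k + 1), MemZlAB A B πr k b2 := by

  intro b2
  classical
  -- Choose the elements `b0i i ∈ B^{(n)}` with `b2 ⬝ e_i = incl (b0i i)`.
  choose b0i hb0i using fun i => hsub i b2
  -- `incl (b0i i) → b2` weak-star, using the locally topological center at `e2`.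
  have hconv2 : ∀ b1 : ((BB.of B).diter k).dual.carrier,
      Tendsto (fun i => b1 (b0i i)) l (𝓝 (b2 b1)) := by
    intro b1
    have h := hloc b2 l hl (fun i => BB.incl ((BB.of A).diter k) (e i)) hconv b1
    rw [hunit b2] at h
    have heq : ∀ i, actR A B πr (k + 1) b2 (BB.incl ((BB.of A).diter k) (e i)) b1
        = b1 (b0i i) := fun i => by rw [hb0i i]; rfl
    simpa only [heq] using h
  -- The family `b0i` is bounded.
  obtain ⟨C, hC⟩ := isBounded_iff_forall_norm_le.mp hbd
  have hbd2 : Bornology.IsBounded (Set.range b0i) := by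
    rw [isBounded_iff_forall_norm_le]
    refine ⟨‖actR A B πr (k + 1) b2‖ * C, ?_⟩
    rintro _ ⟨i, rfl⟩
    have h1 : ‖b0i i‖ = ‖actR A B πr (k + 1) b2 (BB.incl ((BB.of A).diter k) (e i))‖ := by
      rw [hb0i i, BB.norm_incl]
    rw [h1]
    calc ‖actR A B πr (k + 1) b2 (BB.incl ((BB.of A).diter k) (e i))‖
        ≤ ‖actR A B πr (k + 1) b2‖ * ‖BB.incl ((BB.of A).diter k) (e i)‖ :=
          (actR A B πr (k + 1) b2).le_opNorm _
      _ = ‖actR A B πr (k + 1) b2‖ * ‖e i‖ := by rw [BB.norm_incl]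
      _ ≤ ‖actR A B πr (k + 1) b2‖ * C :=
          mul_le_mul_of_nonneg_left (hC _ ⟨i, rfl⟩) (norm_nonneg _)
  -- By relative weak compactness, extract a weak cluster point `b0` of the net.
  have hcpt := hwc _ hbd2
  set f : ι → WeakSpace ℝ (Bd B k) := fun i => toWeakSpace ℝ (Bd B k) (b0i i) with hf
  have hmem : Filter.map f l ≤ Filter.principal
      (closure (toWeakSpace ℝ (Bd B k) '' Set.range b0i)) := by
    refine Filter.le_principal_iff.mpr (Filter.mem_map.mpr
      (Filter.Eventually.of_forall fun i => ?_))
    exact subset_closure ⟨b0i i, Set.mem_range_self i, rfl⟩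
  haveI : l.NeBot := hl
  haveI : (Filter.map f l).NeBot := Filter.map_neBot
  obtain ⟨b0w, -, hb0w⟩ := hcpt.exists_clusterPt hmem
  set b0 : Bd B k := (toWeakSpace ℝ (Bd B k)).symm b0w with hb0def
  -- The cluster point satisfies `b1 b0 = b2 b1` for every `b1`, since the net
  -- `b1 (b0i i)` converges to `b2 b1`.
  have hkey : ∀ b1 : ((BB.of B).diter k).dual.carrier, b1 b0 = b2 b1 := by
    intro b1
    have hg : Continuous fun x : WeakSpace ℝ (Bd B k) => b1 x :=
      WeakBilin.eval_continuous _ b1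
    have htm : Tendsto (fun x : WeakSpace ℝ (Bd B k) => b1 x) (Filter.map f l)
        (Filter.map (fun i => b1 (b0i i)) l) := by
      rw [Filter.tendsto_map'_iff]
      exact Filter.tendsto_map
    have hcp2 : ClusterPt (b1 b0) (Filter.map (fun i => b1 (b0i i)) l) :=
      hb0w.map hg.continuousAt htm
    exact eq_of_nhds_neBot (hcp2.mono (hconv2 b1))
  -- Hence `b2 = incl b0` lies in the image of `B^{(n)}`.
  have hb2 : BB.incl ((BB.of B).diter k) b0 = b2 := ContinuousLinearMap.ext fun b1 => hkey b1
  -- Elements of the image of `B^{(n)}` are in the topological center.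
  intro ι' l' hl' aα a haa b1
  rw [← hb2]
  have hred : actR A B πr (k + 1) = BB.arens (actR A B πr k) := rfl
  simp only [hred, BB.arens_incl]
  exact haa (BB.bst (actR A B πr k) b1 b0)
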